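/- (Deterministic core of Proposition 2.) Let E be a finite-dimensional real inner product space, let W₁, …, W_T be subspaces of E with orthogonal projections P₁, …, P_T, let W = W₁ + … + W_T with orthogonal projection P_W, and let β ∈ E. Then P_W β is the unique element of minimum norm in the set {γ ∈ E : P_i γ = P_i β for all i ∈ {1, …, T}}; that is, P_W β satisfies all constraints, and every other γ satisfying all constraints has ‖γ‖ > ‖P_W β‖. -/

import Mathlib

open RealInnerProductSpace

/-- Deterministic core of Proposition 2: for subspaces `W₁, …, W_T` of a finite-dimensional
real inner product space with `W = W₁ + … + W_T`, the projection `P_W β` is the unique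
minimum-norm element of `{γ : P_i γ = P_i β for all i}`: it satisfies all constraints, and
any other feasible `γ` has strictly larger norm. -/
theorem stmt7 {E : Type*} [NormedAddCommGroup E] [InnerProductSpace ℝ E]
    [FiniteDimensional ℝ E] (T : ℕ) (W : Fin T → Submodule ℝ E) (β : E) :
    (∀ i : Fin T,
        Submodule.orthogonalProjectionOnto (W i) ((Submodule.orthogonalProjectionOnto (⨆ j : Fin T, W j) β : E))
          = Submodule.orthogonalProjectionOnto (W i) β) ∧
    (∀ γ : E,
        (∀ i : Fin T, Submodule.orthogonalProjectionOnto (W i) γ = Submodule.orthogonalProjectionOnto (W i) β) →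
        γ ≠ (Submodule.orthogonalProjectionOnto (⨆ j : Fin T, W j) β : E) →
        ‖(Submodule.orthogonalProjectionOnto (⨆ j : Fin T, W j) β : E)‖ < ‖γ‖) := by
  set V := ⨆ j : Fin T, W j with hV
  have hmem : ∀ (i : Fin T) (x : E), x ∈ Vᗮ → x ∈ (W i)ᗮ := by
    intro i x hx
    exact Submodule.orthogonal_le (le_iSup W i) hx
  have hsub : ∀ x : E, x - (Submodule.orthogonalProjectionOnto V x : E) ∈ Vᗮ :=
    fun x => Submodule.sub_starProjection_mem_orthogonal x
  constructor
  · intro i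
    have h1 : (Submodule.orthogonalProjectionOnto (W i)) (β - (Submodule.orthogonalProjectionOnto V β : E)) = 0 :=
      Submodule.orthogonalProjectionOnto_eq_zero_iff.mpr (hmem i _ (hsub β))
    have := map_sub (Submodule.orthogonalProjectionOnto (W i)) β ((Submodule.orthogonalProjectionOnto V β : E))
    rw [h1] at this
    exact (sub_eq_zero.mp this.symm).symm
  · intro γ hγ hne
    -- γ - β ∈ Vᗮ
    have hgb : γ - β ∈ Vᗮ := by
      rw [← Submodule.iInf_orthogonal]
      refine Submodule.mem_iInf _ |>.mpr fun i => ?_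
      have : (Submodule.orthogonalProjectionOnto (W i)) (γ - β) = 0 := by
        rw [map_sub, hγ i, sub_self]
      exact Submodule.orthogonalProjectionOnto_eq_zero_iff.mp this
    have hPγ : Submodule.orthogonalProjectionOnto V γ = Submodule.orthogonalProjectionOnto V β := by
      have : (Submodule.orthogonalProjectionOnto V) (γ - β) = 0 :=
        Submodule.orthogonalProjectionOnto_eq_zero_iff.mpr hgb
      rw [map_sub, sub_eq_zero] at this
      exact this
    have hperp : γ - (Submodule.orthogonalProjectionOnto V γ : E) ≠ 0 := by
      intro h
      apply hne
      rw [sub_eq_zero] at h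
      rw [h, hPγ]
    have hdecomp : ‖γ‖ ^ 2 = ‖(Submodule.orthogonalProjectionOnto V γ : E)‖ ^ 2
        + ‖γ - (Submodule.orthogonalProjectionOnto V γ : E)‖ ^ 2 := by
      have := norm_add_sq_real ((Submodule.orthogonalProjectionOnto V γ : E))
        (γ - (Submodule.orthogonalProjectionOnto V γ : E))
      have hin : (inner ℝ ((Submodule.orthogonalProjectionOnto V γ : E)) (γ - (Submodule.orthogonalProjectionOnto V γ : E)) : ℝ) = 0 :=
        Submodule.inner_right_of_mem_orthogonal (Submodule.orthogonalProjectionOnto V γ).2 (hsub γ)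
      rw [hin, mul_zero, add_zero, add_sub_cancel] at this
      exact this
    have hpos : 0 < ‖γ - (Submodule.orthogonalProjectionOnto V γ : E)‖ := norm_pos_iff.mpr hperp
    have : ‖(Submodule.orthogonalProjectionOnto V γ : E)‖ < ‖γ‖ := by
      nlinarith [norm_nonneg γ, norm_nonneg ((Submodule.orthogonalProjectionOnto V γ : E))]
    rwa [hPγ] at this
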